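/- arXiv:0803.1942 — 9 statements merged into one kernel-verified Lean document; each statement's English description precedes it below -/
import Mathlib

section
/- Let α > 0 and let γ₁,…,γ_p, η₁,…,η_p be nonnegative reals with γ_i < α for all i. Define τ = min_{i≤p} η_i/(α−γ_i). Then for every L > 0 and every δ > 0 there exists M > 0 such that for all natural numbers n ≥ 1 and all u ≥ 0: L·(∑_{i≤p} n^{−η_i} u^{γ_i}) ≤ δ·u^α + M·n^{−ατ}. -/
open Finset

lemma aux_term (α γ η L δ τ : ℝ) (hα : 0 < α) (hγ0 : 0 ≤ γ) (hγα : γ < α)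
    (hη0 : 0 ≤ η) (hτ : τ ≤ η / (α - γ)) (hL : 0 < L) (hδ : 0 < δ) :
    ∃ M > (0 : ℝ), ∀ n : ℕ, 1 ≤ n → ∀ u : ℝ, 0 ≤ u →
      L * ((n : ℝ) ^ (-η) * u ^ γ) ≤ δ * u ^ α + M * (n : ℝ) ^ (-(α * τ)) := by
  set θ : ℝ := γ / α with hθ
  have hα0 : α ≠ 0 := hα.ne'
  have hθ0 : 0 ≤ θ := div_nonneg hγ0 hα.le
  have hθ1 : θ < 1 := (div_lt_one hα).mpr hγα
  have h1θ : 0 < 1 - θ := by linarith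
  set A : ℝ := δ / (θ + 1) with hA
  have hA0 : 0 < A := div_pos hδ (by linarith)
  have hAθ : 0 < A ^ θ := Real.rpow_pos_of_pos hA0 θ
  set C : ℝ := (L / A ^ θ) ^ (1 / (1 - θ)) with hC
  have hLA : 0 < L / A ^ θ := div_pos hL hAθ
  have hC0 : 0 < C := Real.rpow_pos_of_pos hLA _
  refine ⟨(1 - θ) * C, mul_pos h1θ hC0, fun n hn u hu => ?_⟩
  have hn0 : (0:ℝ) ≤ n := Nat.cast_nonneg n
  have hn1 : (1:ℝ) ≤ n := by exact_mod_cast hn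
  have hp1 : (0:ℝ) ≤ A * u ^ α := mul_nonneg hA0.le (Real.rpow_nonneg hu α)
  have hp2 : (0:ℝ) ≤ C * (n : ℝ) ^ (-(η / (1 - θ))) :=
    mul_nonneg hC0.le (Real.rpow_nonneg hn0 _)
  have key := Real.geom_mean_le_arith_mean2_weighted hθ0 h1θ.le hp1 hp2 (by ring)
  have e1 : (A * u ^ α) ^ θ * (C * (n : ℝ) ^ (-(η / (1 - θ)))) ^ (1 - θ)
      = L * ((n : ℝ) ^ (-η) * u ^ γ) := by
    rw [Real.mul_rpow hA0.le (Real.rpow_nonneg hu α),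
        Real.mul_rpow hC0.le (Real.rpow_nonneg hn0 _),
        ← Real.rpow_mul hu, ← Real.rpow_mul hn0, ← Real.rpow_mul hLA.le]
    have e2 : α * θ = γ := by rw [hθ]; field_simp
    have e3 : -(η / (1 - θ)) * (1 - θ) = -η := by field_simp [h1θ.ne']
    have e4 : 1 / (1 - θ) * (1 - θ) = 1 := by field_simp [h1θ.ne']
    rw [e2, e3, e4, Real.rpow_one]
    have hAθ' : A ^ θ ≠ 0 := hAθ.ne'
    have hcan : A ^ θ * (L / A ^ θ) = L := mul_div_cancel₀ L hAθ'
    calc A ^ θ * u ^ γ * (L / A ^ θ * (n:ℝ) ^ (-η))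
        = A ^ θ * (L / A ^ θ) * (u ^ γ * (n:ℝ) ^ (-η)) := by ring
      _ = L * ((n:ℝ) ^ (-η) * u ^ γ) := by rw [hcan]; ring
  rw [e1] at key
  refine key.trans ?_
  have b1 : θ * (A * u ^ α) ≤ δ * u ^ α := by
    have : θ * A ≤ δ := by
      rw [hA, ← mul_div_assoc, div_le_iff₀ (by linarith : (0:ℝ) < θ + 1)]
      nlinarith
    calc θ * (A * u ^ α) = (θ * A) * u ^ α := by ring
    _ ≤ δ * u ^ α := mul_le_mul_of_nonneg_right this (Real.rpow_nonneg hu α)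
  have b2 : (1 - θ) * (C * (n : ℝ) ^ (-(η / (1 - θ)))) ≤ (1 - θ) * C * (n : ℝ) ^ (-(α * τ)) := by
    rw [mul_assoc]
    refine mul_le_mul_of_nonneg_left (mul_le_mul_of_nonneg_left ?_ hC0.le) h1θ.le
    apply Real.rpow_le_rpow_of_exponent_le hn1
    rw [neg_le_neg_iff]
    have h1 : α * τ ≤ α * (η / (α - γ)) := mul_le_mul_of_nonneg_left hτ hα.le
    refine h1.trans_eq ?_
    rw [hθ]
    have hαγ : α - γ ≠ 0 := by linarith [hγα]
    field_simp
  linarith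

/-- Deterministic core of Lemma 3: for α > 0 and nonnegative exponents γᵢ < α, ηᵢ,
with τ = minᵢ ηᵢ/(α−γᵢ), for every L > 0 and δ > 0 there is M > 0 such that
L·∑ᵢ n^{−ηᵢ} u^{γᵢ} ≤ δ·u^α + M·n^{−ατ} for all n ≥ 1 and u ≥ 0. -/
theorem stmt_0 (p : ℕ) (α : ℝ) (hα : 0 < α)
    (γ η : Fin (p + 1) → ℝ)
    (hγ0 : ∀ i, 0 ≤ γ i) (hη0 : ∀ i, 0 ≤ η i) (hγα : ∀ i, γ i < α)
    (τ : ℝ) (hτ : τ = (Finset.univ.inf' Finset.univ_nonempty fun i => η i / (α - γ i))) :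
    ∀ L > (0 : ℝ), ∀ δ > (0 : ℝ), ∃ M > (0 : ℝ), ∀ n : ℕ, 1 ≤ n → ∀ u : ℝ, 0 ≤ u →
      L * (∑ i, (n : ℝ) ^ (-η i) * u ^ (γ i)) ≤ δ * u ^ α + M * (n : ℝ) ^ (-(α * τ)) := by
  intro L hL δ hδ
  have hδ' : 0 < δ / (p + 1 : ℝ) := div_pos hδ (by positivity)
  have hτi : ∀ i : Fin (p+1), τ ≤ η i / (α - γ i) := by
    intro i
    rw [hτ]
    exact Finset.inf'_le _ (Finset.mem_univ i)
  choose M hM0 hM using fun i : Fin (p+1) =>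
    aux_term α (γ i) (η i) L (δ / (p + 1 : ℝ)) τ hα (hγ0 i) (hγα i) (hη0 i) (hτi i) hL hδ'
  refine ⟨∑ i, M i, Finset.sum_pos (fun i _ => hM0 i) Finset.univ_nonempty, fun n hn u hu => ?_⟩
  rw [Finset.mul_sum]
  calc ∑ i, L * ((n : ℝ) ^ (-η i) * u ^ (γ i))
      ≤ ∑ i : Fin (p+1), (δ / (p + 1 : ℝ) * u ^ α + M i * (n : ℝ) ^ (-(α * τ))) :=
        Finset.sum_le_sum fun i _ => hM i n hn u hu
    _ = δ * u ^ α + (∑ i, M i) * (n : ℝ) ^ (-(α * τ)) := by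
        rw [Finset.sum_add_distrib, Finset.sum_const, ← Finset.sum_mul]
        simp [Finset.card_univ]
        have hp1 : (1 + (p:ℝ)) ≠ 0 := by positivity
        field_simp
end

section
/- Let G_n : ℝ^{d₁} × ℝ^{d₂} → ℝ be deterministic functions and (a_n, b_n) points with G_n(a_n, b_n) ≤ G_n(0,0) and ‖(a_n, b_n)‖ → 0. Let α ≥ β > 0, and γ₁,…,γ_p, η₁,…,η_p ≥ 0 with γ_i < α. Suppose G_n(a,b) − G_n(0,0) = M_n(a,b) − N_n(a,b), where for all large n, M_n(a_n, b_n) ≥ c₀(‖a_n‖^α + ‖b_n‖^β) for a fixed c₀ > 0, and max(N_n(a_n, b_n), 0) ≤ C·∑_{i≤p} n^{−η_i} ‖(a_n, b_n)‖^{γ_i} for a fixed C > 0. Define τ_a = min_{i≤p} η_i/(α−γ_i). Then there is a constant K such that for all large n, ‖a_n‖ ≤ K n^{−τ_a} and ‖b_n‖ ≤ K n^{−ατ_a/β}. -/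
open Filter Finset

lemma aux_rpow_extract {x y t : ℝ} (hx : 0 ≤ x) (ht : 0 < t) (h : x ^ t ≤ y) :
    x ≤ y ^ (1 / t) := by
  have h2 := Real.rpow_le_rpow (Real.rpow_nonneg hx t) h (by positivity : (0:ℝ) ≤ 1 / t)
  rwa [← Real.rpow_mul hx, mul_one_div_cancel ht.ne', Real.rpow_one] at h2

/-- Deterministic version of Lemma 1 (rates of convergence for two-component minimizers):
with G_n(a_n,b_n) ≤ G_n(0,0), ‖(a_n,b_n)‖ → 0, the decomposition G_n − G_n(0,0) = M_n − N_n,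
a lower bound M_n(a_n,b_n) ≥ c₀(‖a_n‖^α + ‖b_n‖^β) and a polynomial upper bound on (N_n)⁺,
one gets ‖a_n‖ ≤ K n^{−τ_a} and ‖b_n‖ ≤ K n^{−ατ_a/β} eventually, where
τ_a = minᵢ ηᵢ/(α−γᵢ). -/
theorem stmt_5 (d₁ d₂ p : ℕ) (α β : ℝ) (hβ : 0 < β) (hαβ : β ≤ α)
    (γ η : Fin (p + 1) → ℝ)
    (hγ0 : ∀ i, 0 ≤ γ i) (hη0 : ∀ i, 0 ≤ η i) (hγα : ∀ i, γ i < α)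
    (G M N : ℕ → EuclideanSpace ℝ (Fin d₁) × EuclideanSpace ℝ (Fin d₂) → ℝ)
    (a : ℕ → EuclideanSpace ℝ (Fin d₁)) (b : ℕ → EuclideanSpace ℝ (Fin d₂))
    (hle : ∀ n, G n (a n, b n) ≤ G n (0, 0))
    (htend : Tendsto (fun n => ‖(a n, b n)‖) atTop (nhds 0))
    (hdec : ∀ n x, G n x - G n (0, 0) = M n x - N n x)
    (c₀ : ℝ) (hc₀ : 0 < c₀)
    (hM : ∀ᶠ n in atTop, c₀ * (‖a n‖ ^ α + ‖b n‖ ^ β) ≤ M n (a n, b n))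
    (C : ℝ) (hC : 0 < C)
    (hN : ∀ᶠ n in atTop,
      max (N n (a n, b n)) 0 ≤ C * ∑ i, (n : ℝ) ^ (-η i) * ‖(a n, b n)‖ ^ (γ i))
    (τa : ℝ) (hτa : τa = (Finset.univ.inf' Finset.univ_nonempty fun i => η i / (α - γ i))) :
    ∃ K : ℝ, ∀ᶠ n in atTop,
      ‖a n‖ ≤ K * (n : ℝ) ^ (-τa) ∧ ‖b n‖ ≤ K * (n : ℝ) ^ (-(α * τa / β)) := by
  have hα : 0 < α := hβ.trans_le hαβ
  have hd : ∀ i, 0 < α - γ i := fun i => sub_pos.2 (hγα i)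
  have hτ0 : 0 ≤ τa := by
    rw [hτa]
    exact Finset.le_inf' _ _ (fun i _ => div_nonneg (hη0 i) (hd i).le)
  have hτle : ∀ i, τa * (α - γ i) ≤ η i := by
    intro i
    have h := Finset.inf'_le (fun i => η i / (α - γ i)) (Finset.mem_univ i)
    rw [← hτa] at h
    exact (le_div_iff₀ (hd i)).mp h
  set D : ℝ := (p + 1 : ℝ) * C / c₀ with hD
  have hDpos : 0 < D := by positivity
  set Ka : ℝ := max 1 (Finset.univ.sup' Finset.univ_nonempty fun i => D ^ (1 / (α - γ i)))
    with hKadef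
  have hKa1 : 1 ≤ Ka := le_max_left _ _
  have hKa0 : 0 < Ka := one_pos.trans_le hKa1
  set Γ : ℝ := Finset.univ.sup' Finset.univ_nonempty γ with hΓ
  set Kb : ℝ := (D * Ka ^ Γ) ^ (1 / β) with hKb
  have hKb0 : 0 ≤ Kb := Real.rpow_nonneg (by positivity) _
  have hKnn : 0 ≤ max Ka Kb := le_trans hKa0.le (le_max_left _ _)
  refine ⟨max Ka Kb, ?_⟩
  have hsmall : ∀ᶠ n in atTop, ‖(a n, b n)‖ ≤ 1 :=
    htend.eventually (eventually_le_nhds one_pos)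
  filter_upwards [hM, hN, hsmall, eventually_ge_atTop 1] with n hMn hNn hr1 hn1'
  have hn1 : (1:ℝ) ≤ (n:ℝ) := by exact_mod_cast hn1'
  have hnpos : (0:ℝ) < (n:ℝ) := one_pos.trans_le hn1
  have hn0 : (0:ℝ) ≤ (n:ℝ) := hnpos.le
  set r : ℝ := ‖(a n, b n)‖ with hrdef
  have hr0 : 0 ≤ r := norm_nonneg _
  have hna : ‖a n‖ ≤ r := norm_fst_le (a n, b n)
  have hnb : ‖b n‖ ≤ r := norm_snd_le (a n, b n)
  rcases eq_or_lt_of_le hr0 with hr | hr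
  · have ha0 : ‖a n‖ = 0 := le_antisymm (hna.trans hr.ge) (norm_nonneg _)
    have hb0 : ‖b n‖ = 0 := le_antisymm (hnb.trans hr.ge) (norm_nonneg _)
    constructor
    · rw [ha0]; exact mul_nonneg hKnn (Real.rpow_nonneg hn0 _)
    · rw [hb0]; exact mul_nonneg hKnn (Real.rpow_nonneg hn0 _)
  · -- main case r > 0
    have hMle : M n (a n, b n) ≤ max (N n (a n, b n)) 0 := by
      have h1 := hdec n (a n, b n)
      have h2 := hle n
      have h3 : M n (a n, b n) ≤ N n (a n, b n) := by linarith
      exact h3.trans (le_max_left _ _)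
    have hbase : c₀ * (‖a n‖ ^ α + ‖b n‖ ^ β) ≤ C * ∑ i, (n:ℝ) ^ (-η i) * r ^ (γ i) :=
      hMn.trans (hMle.trans hNn)
    obtain ⟨i₀, -, hi₀⟩ := Finset.exists_mem_eq_sup' (Finset.univ_nonempty)
        (fun i => (n:ℝ) ^ (-η i) * r ^ (γ i))
    have hsum : ∑ i, (n:ℝ) ^ (-η i) * r ^ (γ i)
        ≤ (p + 1 : ℝ) * ((n:ℝ) ^ (-η i₀) * r ^ (γ i₀)) := by
      have hb : ∀ i ∈ Finset.univ, (n:ℝ) ^ (-η i) * r ^ (γ i)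
          ≤ (n:ℝ) ^ (-η i₀) * r ^ (γ i₀) := fun i _ =>
        hi₀ ▸ Finset.le_sup' (fun i => (n:ℝ) ^ (-η i) * r ^ (γ i)) (Finset.mem_univ i)
      calc ∑ i, (n:ℝ) ^ (-η i) * r ^ (γ i)
          ≤ ∑ _i : Fin (p + 1), (n:ℝ) ^ (-η i₀) * r ^ (γ i₀) := Finset.sum_le_sum hb
        _ = (p + 1 : ℝ) * ((n:ℝ) ^ (-η i₀) * r ^ (γ i₀)) := by
            rw [Finset.sum_const, Finset.card_univ, Fintype.card_fin, nsmul_eq_mul]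
            push_cast; ring
    have hterm_nn : 0 ≤ (n:ℝ) ^ (-η i₀) * r ^ (γ i₀) :=
      mul_nonneg (Real.rpow_nonneg hn0 _) (Real.rpow_nonneg hr0 _)
    -- bound for ‖b n‖^β and for r^α
    have hrα : r ^ α ≤ ‖a n‖ ^ α + ‖b n‖ ^ β := by
      have hba : (0:ℝ) ≤ ‖a n‖ ^ α := Real.rpow_nonneg (norm_nonneg _) _
      have hbb : (0:ℝ) ≤ ‖b n‖ ^ β := Real.rpow_nonneg (norm_nonneg _) _
      rcases le_total ‖a n‖ ‖b n‖ with h | h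
      · have hrb : r = ‖b n‖ := by rw [hrdef, Prod.norm_def]; exact max_eq_right h
        have h2 : r ^ α ≤ r ^ β := Real.rpow_le_rpow_of_exponent_ge hr hr1 hαβ
        rw [hrb] at h2
        rw [hrb]; linarith
      · have hra : r = ‖a n‖ := by rw [hrdef, Prod.norm_def]; exact max_eq_left h
        rw [hra]; linarith
    have hkey : c₀ * r ^ α ≤ (p + 1 : ℝ) * C * ((n:ℝ) ^ (-η i₀) * r ^ (γ i₀)) := by
      calc c₀ * r ^ α ≤ c₀ * (‖a n‖ ^ α + ‖b n‖ ^ β) :=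
            mul_le_mul_of_nonneg_left hrα hc₀.le
        _ ≤ C * ∑ i, (n:ℝ) ^ (-η i) * r ^ (γ i) := hbase
        _ ≤ C * ((p + 1 : ℝ) * ((n:ℝ) ^ (-η i₀) * r ^ (γ i₀))) :=
            mul_le_mul_of_nonneg_left hsum hC.le
        _ = (p + 1 : ℝ) * C * ((n:ℝ) ^ (-η i₀) * r ^ (γ i₀)) := by ring
    have hrγ : 0 < r ^ (γ i₀) := Real.rpow_pos_of_pos hr _
    have hsplit : r ^ α = r ^ (α - γ i₀) * r ^ (γ i₀) := by
      rw [← Real.rpow_add hr]; ring_nf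
    have hkey2 : r ^ (α - γ i₀) ≤ D * (n:ℝ) ^ (-η i₀) := by
      have h3 : c₀ * r ^ (α - γ i₀) ≤ (p + 1 : ℝ) * C * (n:ℝ) ^ (-η i₀) := by
        have h4 : (c₀ * r ^ (α - γ i₀)) * r ^ (γ i₀)
            ≤ ((p + 1 : ℝ) * C * (n:ℝ) ^ (-η i₀)) * r ^ (γ i₀) := by
          rw [hsplit] at hkey; linear_combination hkey
        exact le_of_mul_le_mul_right h4 hrγ
      rw [hD, div_mul_eq_mul_div, le_div_iff₀ hc₀]
      linarith
    have hrle : r ≤ D ^ (1 / (α - γ i₀)) * (n:ℝ) ^ (-η i₀ * (1 / (α - γ i₀))) := by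
      have h4 := aux_rpow_extract hr0 (hd i₀) hkey2
      rwa [Real.mul_rpow hDpos.le (Real.rpow_nonneg hn0 _), ← Real.rpow_mul hn0] at h4
    have hrKa : r ≤ Ka * (n:ℝ) ^ (-τa) := by
      have h5 : D ^ (1 / (α - γ i₀)) ≤ Ka :=
        le_trans (Finset.le_sup' (fun i => D ^ (1 / (α - γ i))) (Finset.mem_univ i₀))
          (le_max_right _ _)
      have h6 : (n:ℝ) ^ (-η i₀ * (1 / (α - γ i₀))) ≤ (n:ℝ) ^ (-τa) := by
        apply Real.rpow_le_rpow_of_exponent_le hn1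
        rw [neg_mul, mul_one_div]
        exact neg_le_neg ((le_div_iff₀ (hd i₀)).mpr (hτle i₀))
      exact hrle.trans (mul_le_mul h5 h6 (Real.rpow_nonneg hn0 _) hKa0.le)
    constructor
    · exact hna.trans (hrKa.trans
        (mul_le_mul_of_nonneg_right (le_max_left _ _) (Real.rpow_nonneg hn0 _)))
    · -- bound on b
      have hbβ : c₀ * ‖b n‖ ^ β ≤ (p + 1 : ℝ) * C * ((n:ℝ) ^ (-η i₀) * r ^ (γ i₀)) := by
        have hba : (0:ℝ) ≤ ‖a n‖ ^ α := Real.rpow_nonneg (norm_nonneg _) _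
        calc c₀ * ‖b n‖ ^ β ≤ c₀ * (‖a n‖ ^ α + ‖b n‖ ^ β) :=
              mul_le_mul_of_nonneg_left (le_add_of_nonneg_left hba) hc₀.le
          _ ≤ C * ∑ i, (n:ℝ) ^ (-η i) * r ^ (γ i) := hbase
          _ ≤ C * ((p + 1 : ℝ) * ((n:ℝ) ^ (-η i₀) * r ^ (γ i₀))) :=
              mul_le_mul_of_nonneg_left hsum hC.le
          _ = (p + 1 : ℝ) * C * ((n:ℝ) ^ (-η i₀) * r ^ (γ i₀)) := by ring
      have h7 : r ^ (γ i₀) ≤ Ka ^ (γ i₀) * (n:ℝ) ^ (-τa * γ i₀) := by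
        have h := Real.rpow_le_rpow hr0 hrKa (hγ0 i₀)
        rwa [Real.mul_rpow hKa0.le (Real.rpow_nonneg hn0 _), ← Real.rpow_mul hn0] at h
      have h8 : (n:ℝ) ^ (-η i₀) * (n:ℝ) ^ (-τa * γ i₀)
          = (n:ℝ) ^ (-η i₀ + -τa * γ i₀) := (Real.rpow_add hnpos _ _).symm
      have h9 : (n:ℝ) ^ (-η i₀ + -τa * γ i₀) ≤ (n:ℝ) ^ (-(α * τa)) := by
        apply Real.rpow_le_rpow_of_exponent_le hn1
        have h := hτle i₀
        rw [mul_sub] at h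
        linarith
      have hKaΓ : Ka ^ (γ i₀) ≤ Ka ^ Γ :=
        Real.rpow_le_rpow_of_exponent_le hKa1 (Finset.le_sup' γ (Finset.mem_univ i₀))
      have hb2 : ‖b n‖ ^ β ≤ (D * Ka ^ Γ) * (n:ℝ) ^ (-(α * τa)) := by
        have hstep : (n:ℝ) ^ (-η i₀) * r ^ (γ i₀)
            ≤ Ka ^ Γ * (n:ℝ) ^ (-(α * τa)) := by
          calc (n:ℝ) ^ (-η i₀) * r ^ (γ i₀)
              ≤ (n:ℝ) ^ (-η i₀) * (Ka ^ (γ i₀) * (n:ℝ) ^ (-τa * γ i₀)) :=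
                mul_le_mul_of_nonneg_left h7 (Real.rpow_nonneg hn0 _)
            _ = Ka ^ (γ i₀) * ((n:ℝ) ^ (-η i₀) * (n:ℝ) ^ (-τa * γ i₀)) := by ring
            _ = Ka ^ (γ i₀) * (n:ℝ) ^ (-η i₀ + -τa * γ i₀) := by rw [h8]
            _ ≤ Ka ^ Γ * (n:ℝ) ^ (-(α * τa)) :=
                mul_le_mul hKaΓ h9 (Real.rpow_nonneg hn0 _)
                  (Real.rpow_nonneg hKa0.le _)
        have h10 : c₀ * ‖b n‖ ^ β ≤ (p + 1 : ℝ) * C * (Ka ^ Γ * (n:ℝ) ^ (-(α * τa))) :=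
          hbβ.trans (mul_le_mul_of_nonneg_left hstep (by positivity))
        rw [hD]
        rw [div_mul_eq_mul_div, div_mul_eq_mul_div, le_div_iff₀ hc₀]
        linear_combination h10
      have h11 : ‖b n‖ ≤ ((D * Ka ^ Γ) * (n:ℝ) ^ (-(α * τa))) ^ (1 / β) :=
        aux_rpow_extract (norm_nonneg _) hβ hb2
      have hEnn : (0:ℝ) ≤ D * Ka ^ Γ := by positivity
      rw [Real.mul_rpow hEnn (Real.rpow_nonneg hn0 _), ← Real.rpow_mul hn0] at h11
      have hexp : -(α * τa) * (1 / β) = -(α * τa / β) := by ring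
      rw [hexp, ← hKb] at h11
      exact h11.trans (mul_le_mul_of_nonneg_right (le_max_right Ka Kb)
        (Real.rpow_nonneg hn0 _))
end

section
/- Let A be an abstract set, G_n : A × ℝ^{d₂} → ℝ, and (a_n, b_n) ∈ A × ℝ^{d₂} with G_n(a_n, b_n) ≤ G_n(a_n, 0) and ‖b_n‖ → 0. Let β > 0 and α₁,…,α_p ≥ 0, β₁,…,β_p ≥ 0 with β_i < β. Suppose G_n(a,b) − G_n(a,0) = M_n(a,b) − N_n(a,b) with, for all large n, M_n(a_n, b_n) ≥ c₀‖b_n‖^β for some fixed c₀ > 0 and max(N_n(a_n,b_n),0) ≤ C·∑_{i≤p} n^{−α_i}‖b_n‖^{β_i} for some fixed C > 0. Then ‖b_n‖ ≤ K n^{−τ_b} for τ_b = min_{i≤p} α_i/(β−β_i) and some constant K. Moreover, if N_n(a_n,b_n) ≤ 0 for all large n, then b_n = 0 for all large n. -/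
open Filter Finset

/-- Deterministic version of Theorem 2 (rate of the faster component): the a-component
lives in an abstract set A; from G_n(a_n,b_n) ≤ G_n(a_n,0), ‖b_n‖ → 0, the decomposition
G_n(a,b) − G_n(a,0) = M_n(a,b) − N_n(a,b) with M_n(a_n,b_n) ≥ c₀‖b_n‖^β and
(N_n(a_n,b_n))⁺ ≤ C ∑ᵢ n^{−αᵢ}‖b_n‖^{βᵢ}, one gets ‖b_n‖ ≤ K n^{−τ_b} eventually,
where τ_b = minᵢ αᵢ/(β−βᵢ); and if N_n(a_n,b_n) ≤ 0 eventually, then b_n = 0 eventually. -/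
theorem stmt_6 (A : Type*) (d₂ p : ℕ) (β : ℝ) (hβ : 0 < β)
    (αe βe : Fin (p + 1) → ℝ)
    (hαe : ∀ i, 0 ≤ αe i) (hβe0 : ∀ i, 0 ≤ βe i) (hβe : ∀ i, βe i < β)
    (G M N : ℕ → A × EuclideanSpace ℝ (Fin d₂) → ℝ)
    (a : ℕ → A) (b : ℕ → EuclideanSpace ℝ (Fin d₂))
    (hle : ∀ n, G n (a n, b n) ≤ G n (a n, 0))
    (htend : Tendsto (fun n => ‖b n‖) atTop (nhds 0))
    (hdec : ∀ n x, G n x - G n (x.1, 0) = M n x - N n x)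
    (c₀ : ℝ) (hc₀ : 0 < c₀)
    (hM : ∀ᶠ n in atTop, c₀ * ‖b n‖ ^ β ≤ M n (a n, b n))
    (C : ℝ) (hC : 0 < C)
    (hN : ∀ᶠ n in atTop,
      max (N n (a n, b n)) 0 ≤ C * ∑ i, (n : ℝ) ^ (-αe i) * ‖b n‖ ^ (βe i))
    (τb : ℝ) (hτb : τb = (Finset.univ.inf' Finset.univ_nonempty fun i => αe i / (β - βe i))) :
    (∃ K : ℝ, ∀ᶠ n in atTop, ‖b n‖ ≤ K * (n : ℝ) ^ (-τb)) ∧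
      ((∀ᶠ n in atTop, N n (a n, b n) ≤ 0) → ∀ᶠ n in atTop, b n = 0) := by
  have hMN : ∀ n, M n (a n, b n) ≤ N n (a n, b n) := by
    intro n
    have h := hdec n (a n, b n)
    have := hle n
    simp only at h
    linarith
  constructor
  · -- rate part
    set M0 : ℝ := C * (p + 1) / c₀ with hM0def
    have hM0 : 0 < M0 := by positivity
    refine ⟨univ.sup' univ_nonempty (fun i => M0 ^ (1 / (β - βe i))), ?_⟩
    set K : ℝ := univ.sup' univ_nonempty (fun i => M0 ^ (1 / (β - βe i))) with hKdef
    have hK0 : 0 < K := by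
      obtain ⟨j, _, hj⟩ := Finset.exists_mem_eq_sup' univ_nonempty
        (fun i => M0 ^ (1 / (β - βe i)))
      rw [hKdef, hj]
      exact Real.rpow_pos_of_pos hM0 _
    filter_upwards [hM, hN, eventually_ge_atTop 1] with n hMn hNn hn1
    have hn1' : (1 : ℝ) ≤ (n : ℝ) := by exact_mod_cast hn1
    have hn0 : (0 : ℝ) < (n : ℝ) := lt_of_lt_of_le one_pos hn1'
    have key : c₀ * ‖b n‖ ^ β ≤ C * ∑ i, (n : ℝ) ^ (-αe i) * ‖b n‖ ^ (βe i) :=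
      le_trans (le_trans hMn (le_trans (hMN n) (le_max_left _ _))) hNn
    rcases eq_or_lt_of_le (norm_nonneg (b n)) with hb | hb
    · -- ‖b n‖ = 0
      rw [← hb]
      positivity
    · -- ‖b n‖ > 0
      set t : Fin (p + 1) → ℝ := fun i => (n : ℝ) ^ (-αe i) * ‖b n‖ ^ (βe i) with ht
      obtain ⟨j, _, hj⟩ := Finset.exists_mem_eq_sup' univ_nonempty t
      have hsum : ∑ i, t i ≤ (p + 1 : ℝ) * t j := by
        have := Finset.sum_le_card_nsmul univ t (t j)
          (fun i _ => hj ▸ Finset.le_sup' t (mem_univ i))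
        simpa [nsmul_eq_mul, Fintype.card_fin] using this
      have h1 : ‖b n‖ ^ β ≤ M0 * t j := by
        have h2 : c₀ * ‖b n‖ ^ β ≤ C * ((p + 1 : ℝ) * t j) :=
          le_trans key (by nlinarith [hsum])
        rw [hM0def]
        rw [div_mul_eq_mul_div, le_div_iff₀ hc₀]
        nlinarith
      have hβj : 0 < β - βe j := sub_pos.mpr (hβe j)
      have h3 : ‖b n‖ ^ (β - βe j) ≤ M0 * (n : ℝ) ^ (-αe j) := by
        have hbp : (0 : ℝ) < ‖b n‖ ^ (βe j) := Real.rpow_pos_of_pos hb _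
        have : ‖b n‖ ^ (β - βe j) * ‖b n‖ ^ (βe j) ≤
            (M0 * (n : ℝ) ^ (-αe j)) * ‖b n‖ ^ (βe j) := by
          rw [← Real.rpow_add hb, sub_add_cancel]
          calc ‖b n‖ ^ β ≤ M0 * t j := h1
            _ = (M0 * (n : ℝ) ^ (-αe j)) * ‖b n‖ ^ (βe j) := by rw [ht]; ring
        exact le_of_mul_le_mul_right this hbp
      have he : (0 : ℝ) < 1 / (β - βe j) := by positivity
      have h4 : (‖b n‖ ^ (β - βe j)) ^ (1 / (β - βe j)) ≤
          (M0 * (n : ℝ) ^ (-αe j)) ^ (1 / (β - βe j)) :=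
        Real.rpow_le_rpow (Real.rpow_nonneg (norm_nonneg _) _) h3 he.le
      have hL : (‖b n‖ ^ (β - βe j)) ^ (1 / (β - βe j)) = ‖b n‖ := by
        rw [← Real.rpow_mul (norm_nonneg _), mul_one_div, div_self hβj.ne',
          Real.rpow_one]
      have hR : (M0 * (n : ℝ) ^ (-αe j)) ^ (1 / (β - βe j)) =
          M0 ^ (1 / (β - βe j)) * (n : ℝ) ^ (-(αe j / (β - βe j))) := by
        rw [Real.mul_rpow hM0.le (Real.rpow_nonneg hn0.le _),
          ← Real.rpow_mul hn0.le]
        congr 1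
        field_simp
      rw [hL, hR] at h4
      refine le_trans h4 (mul_le_mul ?_ ?_ (Real.rpow_nonneg hn0.le _) hK0.le)
      · exact hKdef ▸ Finset.le_sup' (fun i => M0 ^ (1 / (β - βe i))) (mem_univ j)
      · apply Real.rpow_le_rpow_of_exponent_le hn1'
        have : τb ≤ αe j / (β - βe j) := hτb ▸ Finset.inf'_le _ (mem_univ j)
        linarith
  · -- degenerate part
    intro hN0
    filter_upwards [hM, hN0] with n hMn hNn
    have h : c₀ * ‖b n‖ ^ β ≤ 0 := le_trans hMn (le_trans (hMN n) hNn)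
    by_contra hbne
    have hb : 0 < ‖b n‖ := norm_pos_iff.mpr hbne
    have : (0 : ℝ) < c₀ * ‖b n‖ ^ β := by positivity
    linarith
end

section
/- Consider G_n(a,b) = (a,b)C_n(a,b)' − 2n^{−1/2}(a,b)·Z_n + (λ₀/2)n^{−1/2}a(1+r_n(a)) + λ₀ n^{−1/2}|b|^{1/2} on ℝ², where C_n are symmetric 2×2 matrices whose smallest eigenvalues are bounded below by c > 0 for all large n, Z_n ∈ ℝ² with ‖Z_n‖ ≤ L bounded, λ₀ > 0, and r_n(a) → 0 uniformly as a → 0. If (a_n, b_n) minimizes G_n with (a_n,b_n) → 0, and G_n(a_n,b_n) ≤ G_n(0,0) = 0, then there is a constant K with ‖(a_n,b_n)‖ ≤ K n^{−1/2} for all large n. -/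
open Filter Matrix

/-- Deterministic rate-of-convergence step for the Lasso example (Section 5, γ = 1/2):
with G_n(a,b) = (a,b)C_n(a,b)' − 2n^{−1/2}(a,b)·Z_n + (λ₀/2)n^{−1/2}a(1+r_n(a))
+ λ₀ n^{−1/2}|b|^{1/2}, C_n symmetric with quadratic form bounded below by c‖·‖²
for large n, Z_n bounded, r_n(a) → 0 uniformly as a → 0, a minimizer (a_n,b_n) → 0
with G_n(a_n,b_n) ≤ G_n(0,0) satisfies ‖(a_n,b_n)‖ ≤ K n^{−1/2} for all large n. -/
theorem stmt_8 (Cn : ℕ → Matrix (Fin 2) (Fin 2) ℝ) (hsymm : ∀ n, (Cn n).IsSymm)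
    (c : ℝ) (hc : 0 < c)
    (heig : ∀ᶠ n in atTop, ∀ x : Fin 2 → ℝ, c * (x ⬝ᵥ x) ≤ x ⬝ᵥ (Cn n).mulVec x)
    (Z : ℕ → Fin 2 → ℝ) (L : ℝ) (hZ : ∀ n i, |Z n i| ≤ L)
    (lam : ℝ) (hlam : 0 < lam)
    (r : ℕ → ℝ → ℝ)
    (hr : ∀ ε > (0 : ℝ), ∃ δ > (0 : ℝ), ∀ n : ℕ, ∀ a : ℝ, |a| < δ → |r n a| < ε)
    (G : ℕ → ℝ × ℝ → ℝ)
    (hG : ∀ n : ℕ, ∀ a b : ℝ, G n (a, b) =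
      (![a, b] ⬝ᵥ (Cn n).mulVec ![a, b])
        - 2 * (n : ℝ) ^ (-(1/2 : ℝ)) * (![a, b] ⬝ᵥ Z n)
        + (lam / 2) * (n : ℝ) ^ (-(1/2 : ℝ)) * a * (1 + r n a)
        + lam * (n : ℝ) ^ (-(1/2 : ℝ)) * |b| ^ (1/2 : ℝ))
    (an bn : ℕ → ℝ)
    (hmin : ∀ n : ℕ, ∀ x : ℝ × ℝ, G n (an n, bn n) ≤ G n x)
    (htend : Tendsto (fun n => (an n, bn n)) atTop (nhds (0, 0)))
    (hle : ∀ n, G n (an n, bn n) ≤ G n (0, 0)) :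
    ∃ K : ℝ, ∀ᶠ n in atTop, ‖(an n, bn n)‖ ≤ K * (n : ℝ) ^ (-(1/2 : ℝ)) := by
  obtain ⟨δ, hδ, hrδ⟩ := hr 1 one_pos
  have hL : 0 ≤ L := (abs_nonneg _).trans (hZ 0 0)
  have han : Tendsto an atTop (nhds 0) := by
    have := (continuous_fst.tendsto ((0 : ℝ), (0 : ℝ))).comp htend
    exact this
  have hsmall : ∀ᶠ n in atTop, |an n| < δ := by
    have := han (Metric.ball_mem_nhds 0 hδ)
    filter_upwards [this] with n hn
    simpa [Real.dist_eq] using hn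
  refine ⟨(4 * L + lam) / c, ?_⟩
  filter_upwards [heig, hsmall] with n hn hra
  set a := an n
  set b := bn n
  set s : ℝ := (n : ℝ) ^ (-(1/2 : ℝ)) with hs_def
  have hs : 0 ≤ s := Real.rpow_nonneg (Nat.cast_nonneg n) _
  have hG0 : G n (0, 0) = 0 := by
    rw [hG n 0 0]
    norm_num [dotProduct, Matrix.mulVec, Fin.sum_univ_two, Real.zero_rpow]
  have key : G n (a, b) ≤ 0 := hG0 ▸ hle n
  rw [hG n a b] at key
  have hquad : c * (a * a + b * b) ≤ ![a, b] ⬝ᵥ (Cn n).mulVec ![a, b] := by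
    have := hn ![a, b]
    simpa [dotProduct, Fin.sum_univ_two] using this
  have hdot : ![a, b] ⬝ᵥ Z n = a * Z n 0 + b * Z n 1 := by
    simp [dotProduct, Fin.sum_univ_two]
  obtain ⟨m, hm⟩ : ∃ m : ℝ, m = max |a| |b| := ⟨_, rfl⟩
  have hnorm : ‖(a, b)‖ = m := by
    rw [hm]; simp [Prod.norm_def, Real.norm_eq_abs]
  have ham : |a| ≤ m := hm ▸ le_max_left _ _
  have hbm : |b| ≤ m := hm ▸ le_max_right _ _
  have hm0 : 0 ≤ m := (abs_nonneg a).trans ham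
  have hZ0 := hZ n 0
  have hZ1 := hZ n 1
  have hrb : |r n a| < 1 := hrδ n a hra
  have hbHalf : 0 ≤ lam * s * |b| ^ (1/2 : ℝ) := by
    positivity
  -- bound the dot product
  have hdotb : |a * Z n 0 + b * Z n 1| ≤ 2 * L * m := by
    calc |a * Z n 0 + b * Z n 1| ≤ |a * Z n 0| + |b * Z n 1| := abs_add_le _ _
    _ = |a| * |Z n 0| + |b| * |Z n 1| := by rw [abs_mul, abs_mul]
    _ ≤ m * L + m * L := add_le_add (mul_le_mul ham hZ0 (abs_nonneg _) hm0)
        (mul_le_mul hbm hZ1 (abs_nonneg _) hm0)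
    _ = 2 * L * m := by ring
  have haterm : |(lam / 2) * s * a * (1 + r n a)| ≤ lam * s * m := by
    have h1 : |1 + r n a| ≤ 2 := by
      calc |1 + r n a| ≤ |(1:ℝ)| + |r n a| := abs_add_le _ _
      _ ≤ 2 := by rw [abs_one]; linarith
    have habs : |(lam / 2) * s * a * (1 + r n a)| = (lam / 2) * s * |a| * |1 + r n a| := by
      rw [abs_mul, abs_mul, abs_mul, abs_of_nonneg (by positivity : (0:ℝ) ≤ lam / 2),
        abs_of_nonneg hs]
    rw [habs]
    calc (lam / 2) * s * |a| * |1 + r n a| ≤ (lam / 2) * s * |a| * 2 :=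
          mul_le_mul_of_nonneg_left h1 (by positivity)
    _ ≤ (lam / 2) * s * m * 2 :=
          mul_le_mul_of_nonneg_right
            (mul_le_mul_of_nonneg_left ham (by positivity)) (by norm_num)
    _ = lam * s * m := by ring
  have hmm : m * m ≤ a * a + b * b := by
    rcases le_total |a| |b| with h | h
    · calc m * m = b * b := by rw [hm, max_eq_right h, abs_mul_abs_self]
      _ ≤ a * a + b * b := le_add_of_nonneg_left (mul_self_nonneg a)
    · calc m * m = a * a := by rw [hm, max_eq_left h, abs_mul_abs_self]
      _ ≤ a * a + b * b := le_add_of_nonneg_right (mul_self_nonneg b)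
  have main : c * (m * m) ≤ (4 * L + lam) * s * m := by
    rw [hdot] at key
    have h1 : c * (a * a + b * b) ≤ 2 * s * (a * Z n 0 + b * Z n 1)
        - (lam / 2) * s * a * (1 + r n a) - lam * s * |b| ^ (1/2 : ℝ) := by
      linarith only [key, hquad]
    have h2 : 2 * s * (a * Z n 0 + b * Z n 1) ≤ 2 * s * (2 * L * m) :=
      mul_le_mul_of_nonneg_left ((le_abs_self _).trans hdotb) (by positivity)
    have h3 : -((lam / 2) * s * a * (1 + r n a)) ≤ lam * s * m :=
      (neg_le_abs _).trans haterm
    have hcm : c * (m * m) ≤ c * (a * a + b * b) :=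
      mul_le_mul_of_nonneg_left hmm hc.le
    linarith only [h1, h2, h3, hcm, hbHalf]
  rw [show ((an n, bn n) : ℝ × ℝ) = (a, b) from rfl, hnorm]
  rcases eq_or_lt_of_le hm0 with h0 | h0
  · rw [← h0]
    positivity
  · have h' : (c * m) * m ≤ ((4 * L + lam) * s) * m := by linarith only [main]
    have hcm2 : c * m ≤ (4 * L + lam) * s := le_of_mul_le_mul_right h' h0
    rw [div_mul_eq_mul_div, le_div_iff₀ hc]
    linarith only [hcm2]
end

section
/- Let v > 0, λ₀ > 0, and suppose real sequences (a_n, b_n) satisfy b_n → 0 and, for a constant C, the function values satisfy 0 ≥ G_n(a_n,b_n) − G_n(a_n,0) where G_n(a_n,b) − G_n(a_n,0) = v b² − R_n(b) + λ₀ n^{−1/2}|b|^{1/2} with |R_n(b_n)| ≤ C n^{−1/2}|b_n| for all large n. Then b_n = 0 for all large n. -/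
open Filter

/-- Sparsity conclusion of the Lasso example (Section 5): if b_n → 0 and
0 ≥ G_n(a_n,b_n) − G_n(a_n,0) = v b_n² − R_n(b_n) + λ₀ n^{−1/2}|b_n|^{1/2} with
|R_n(b_n)| ≤ C n^{−1/2}|b_n| for all large n, then b_n = 0 for all large n. -/
theorem stmt_9 (v lam : ℝ) (hv : 0 < v) (hlam : 0 < lam)
    (b : ℕ → ℝ) (htend : Tendsto b atTop (nhds 0))
    (C : ℝ) (R : ℕ → ℝ → ℝ)
    (hle : ∀ᶠ n in atTop,
      v * (b n) ^ 2 - R n (b n) + lam * (n : ℝ) ^ (-(1/2 : ℝ)) * |b n| ^ (1/2 : ℝ) ≤ 0)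
    (hR : ∀ᶠ n in atTop, |R n (b n)| ≤ C * (n : ℝ) ^ (-(1/2 : ℝ)) * |b n|) :
    ∀ᶠ n in atTop, b n = 0 := by
  set M : ℝ := max C 1 with hMdef
  have hM : 0 < M := lt_of_lt_of_le one_pos (le_max_right _ _)
  set ε : ℝ := lam / M with hεdef
  have hε : 0 < ε := div_pos hlam hM
  have hsmall : ∀ᶠ n in atTop, |b n| < ε ^ 2 := by
    have := Metric.tendsto_nhds.mp htend (ε ^ 2) (by positivity)
    filter_upwards [this] with n hn
    simpa [Real.dist_eq] using hn
  filter_upwards [hle, hR, eventually_ge_atTop 1, hsmall] with n h1 h2 h3 h4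
  by_contra hb
  set t : ℝ := |b n| with htdef
  have ht : 0 < t := abs_pos.mpr hb
  have hnpos : (0:ℝ) < (n : ℝ) := by exact_mod_cast Nat.lt_of_lt_of_le Nat.zero_lt_one h3
  have hp : 0 < (n : ℝ) ^ (-(1/2 : ℝ)) := Real.rpow_pos_of_pos hnpos _
  set p : ℝ := (n : ℝ) ^ (-(1/2 : ℝ)) with hpdef
  have key : lam * p * t ^ (1/2 : ℝ) ≤ C * p * t := by
    have h5 : R n (b n) ≤ C * p * t := le_trans (le_abs_self _) h2
    nlinarith [sq_nonneg (b n), mul_pos hv (sq_nonneg (b n) |>.lt_of_ne' (by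
      exact pow_ne_zero 2 hb))]
  have key2 : lam * t ^ (1/2 : ℝ) ≤ C * t := by
    have := mul_le_mul_of_nonneg_left key (le_of_lt (inv_pos.mpr hp))
    calc lam * t ^ (1/2 : ℝ) = p⁻¹ * (lam * p * t ^ (1/2 : ℝ)) := by
          field_simp
      _ ≤ p⁻¹ * (C * p * t) := this
      _ = C * t := by field_simp
  have htsplit : t = t ^ (1/2 : ℝ) * t ^ (1/2 : ℝ) := by
    rw [← Real.rpow_add ht]
    norm_num
  have htpos : 0 < t ^ (1/2 : ℝ) := Real.rpow_pos_of_pos ht _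
  have key3 : lam ≤ C * t ^ (1/2 : ℝ) := by
    have h := key2
    rw [htsplit] at h
    have := mul_le_mul_of_nonneg_right (le_of_lt htpos) (le_of_lt htpos)
    nlinarith
  have htlt : t ^ (1/2 : ℝ) < ε := by
    have h1 : t ^ (1/2 : ℝ) < (ε ^ 2) ^ (1/2 : ℝ) :=
      Real.rpow_lt_rpow (le_of_lt ht) h4 (by norm_num)
    have h2 : (ε ^ 2) ^ (1/2 : ℝ) = ε := by
      rw [← Real.rpow_natCast ε 2, ← Real.rpow_mul (le_of_lt hε)]
      norm_num
    linarith [h1, h2.le, h2.ge]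
  have : C * t ^ (1/2 : ℝ) ≤ M * t ^ (1/2 : ℝ) :=
    mul_le_mul_of_nonneg_right (le_max_left _ _) (le_of_lt htpos)
  have : M * t ^ (1/2 : ℝ) < M * ε := by
    exact mul_lt_mul_of_pos_left htlt hM
  have hMε : M * ε = lam := by
    rw [hεdef]
    field_simp
  linarith
end

section
/- Let P be a probability distribution on ℝ with a density bounded by B. For R > 0, define the envelope G_R(x) = sup{ |1[(μ+ε)−(ρ+δ), (μ+ε)+(ρ+δ)](x) − 1[μ−(ρ+δ), μ+(ρ+δ)](x)| : ε² + δ² ≤ R² }. Then P G_R² ≤ 8BR for all R ≤ ρ. -/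
open MeasureTheory

/-- Envelope bound from the shorth example (Section 6): if P has density bounded by B,
and G_R is the envelope of the differences of the indicators of [(m+ε)±(ρ+δ)] and
[m±(ρ+δ)] over ε²+δ² ≤ R², then P G_R² ≤ 8BR for 0 < R ≤ ρ. -/
theorem stmt_11 (f : ℝ → ℝ) (B : ℝ) (hf0 : ∀ x, 0 ≤ f x) (hfB : ∀ x, f x ≤ B)
    (P : Measure ℝ) (hP : P = volume.withDensity (fun x => ENNReal.ofReal (f x)))
    [IsProbabilityMeasure P]
    (m ρ : ℝ) (hρ : 0 < ρ) (R : ℝ) (hR : 0 < R) (hRρ : R ≤ ρ)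
    (GR : ℝ → ℝ)
    (hGR : ∀ x : ℝ, GR x = sSup {v : ℝ | ∃ ε δ : ℝ, ε ^ 2 + δ ^ 2 ≤ R ^ 2 ∧
      v = |(Set.Icc (m + ε - (ρ + δ)) (m + ε + (ρ + δ))).indicator (fun _ => (1 : ℝ)) x
            - (Set.Icc (m - (ρ + δ)) (m + (ρ + δ))).indicator (fun _ => (1 : ℝ)) x|}) :
    ∫ x, (GR x) ^ 2 ∂P ≤ 8 * B * R := by
  have hB : 0 ≤ B := le_trans (hf0 0) (hfB 0)
  set S : Set ℝ := Set.Icc (m - ρ - 2*R) (m - ρ + 2*R) ∪ Set.Icc (m + ρ - 2*R) (m + ρ + 2*R)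
    with hSdef
  have hSmeas : MeasurableSet S := measurableSet_Icc.union measurableSet_Icc
  -- pointwise bound
  have hpt : ∀ x, GR x ^ 2 ≤ S.indicator (fun _ => (1:ℝ)) x := by
    intro x
    set V : Set ℝ := {v : ℝ | ∃ ε δ : ℝ, ε ^ 2 + δ ^ 2 ≤ R ^ 2 ∧
      v = |(Set.Icc (m + ε - (ρ + δ)) (m + ε + (ρ + δ))).indicator (fun _ => (1 : ℝ)) x
            - (Set.Icc (m - (ρ + δ)) (m + (ρ + δ))).indicator (fun _ => (1 : ℝ)) x|} with hVdef
    have h0V : (0:ℝ) ∈ V := by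
      refine ⟨0, 0, by nlinarith, ?_⟩
      simp
    have hbdd : ∀ v ∈ V, v ≤ 1 := by
      rintro v ⟨ε, δ, hεδ, rfl⟩
      rw [Set.indicator_apply, Set.indicator_apply]
      split_ifs <;> norm_num
    have hBdd : BddAbove V := ⟨1, fun v hv => hbdd v hv⟩
    have hGnn : 0 ≤ GR x := by
      rw [hGR x]
      exact le_csSup hBdd h0V
    by_cases hxS : x ∈ S
    · have h1 : GR x ≤ 1 := by
        rw [hGR x]; exact csSup_le ⟨0, h0V⟩ hbdd
      have : GR x ^ 2 ≤ 1 := by nlinarith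
      rwa [Set.indicator_of_mem hxS]
    · -- every element of V is zero
      have hx1 : x < m - ρ - 2*R ∨ m - ρ + 2*R < x := by
        by_contra h
        push_neg at h
        exact hxS (Or.inl ⟨h.1, h.2⟩)
      have hx2 : x < m + ρ - 2*R ∨ m + ρ + 2*R < x := by
        by_contra h
        push_neg at h
        exact hxS (Or.inr ⟨h.1, h.2⟩)
      have hzero : ∀ v ∈ V, v = 0 := by
        rintro v ⟨ε, δ, hεδ, rfl⟩
        have hε1 : ε ≤ R := by nlinarith [sq_nonneg (ε - R), sq_nonneg δ]
        have hε2 : -R ≤ ε := by nlinarith [sq_nonneg (ε + R), sq_nonneg δ]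
        have hδ1 : δ ≤ R := by nlinarith [sq_nonneg (δ - R), sq_nonneg ε]
        have hδ2 : -R ≤ δ := by nlinarith [sq_nonneg (δ + R), sq_nonneg ε]
        rcases hx1 with hx1 | hx1 <;> rcases hx2 with hx2 | hx2
        · -- x below both intervals
          have hA : x ∉ Set.Icc (m + ε - (ρ + δ)) (m + ε + (ρ + δ)) := by
            rw [Set.mem_Icc]; push_neg; intro h; linarith
          have hB' : x ∉ Set.Icc (m - (ρ + δ)) (m + (ρ + δ)) := by
            rw [Set.mem_Icc]; push_neg; intro h; linarith
          rw [Set.indicator_of_notMem hA, Set.indicator_of_notMem hB', sub_self, abs_zero]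
        · linarith
        · -- x inside both intervals
          have hA : x ∈ Set.Icc (m + ε - (ρ + δ)) (m + ε + (ρ + δ)) := by
            rw [Set.mem_Icc]; constructor <;> linarith
          have hB' : x ∈ Set.Icc (m - (ρ + δ)) (m + (ρ + δ)) := by
            rw [Set.mem_Icc]; constructor <;> linarith
          rw [Set.indicator_of_mem hA, Set.indicator_of_mem hB', sub_self, abs_zero]
        · -- x above both intervals
          have hA : x ∉ Set.Icc (m + ε - (ρ + δ)) (m + ε + (ρ + δ)) := by
            rw [Set.mem_Icc]; push_neg; intro h; linarith
          have hB' : x ∉ Set.Icc (m - (ρ + δ)) (m + (ρ + δ)) := by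
            rw [Set.mem_Icc]; push_neg; intro h; linarith
          rw [Set.indicator_of_notMem hA, Set.indicator_of_notMem hB', sub_self, abs_zero]
      have hGRx : GR x = 0 := by
        rw [hGR x]
        exact le_antisymm (csSup_le ⟨0, h0V⟩ fun v hv => (hzero v hv).le) (le_csSup hBdd h0V)
      simp [hGRx, Set.indicator_of_notMem hxS]
  -- integrability of the indicator
  have hInd : Integrable (S.indicator (fun _ => (1:ℝ))) P :=
    (integrable_const (1:ℝ)).indicator hSmeas
  have hmono : ∫ x, GR x ^ 2 ∂P ≤ ∫ x, S.indicator (fun _ => (1:ℝ)) x ∂P :=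
    integral_mono_of_nonneg (Filter.Eventually.of_forall fun x => sq_nonneg _) hInd
      (Filter.Eventually.of_forall hpt)
  have hval : ∫ x, S.indicator (fun _ => (1:ℝ)) x ∂P = (P S).toReal := by
    rw [integral_indicator_const (1:ℝ) hSmeas, smul_eq_mul, mul_one]; rfl
  have hvolS : volume S ≤ ENNReal.ofReal (8*R) := by
    calc volume S ≤ volume (Set.Icc (m - ρ - 2*R) (m - ρ + 2*R))
        + volume (Set.Icc (m + ρ - 2*R) (m + ρ + 2*R)) := measure_union_le _ _
      _ = ENNReal.ofReal (4*R) + ENNReal.ofReal (4*R) := by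
          rw [Real.volume_Icc, Real.volume_Icc]
          congr 1 <;> ring_nf
      _ = ENNReal.ofReal (8*R) := by
          rw [← ENNReal.ofReal_add (by linarith) (by linarith)]
          congr 1; ring
  have hPS : P S ≤ ENNReal.ofReal (B * (8*R)) := by
    rw [hP, withDensity_apply _ hSmeas]
    calc ∫⁻ x in S, ENNReal.ofReal (f x) ∂volume
        ≤ ∫⁻ _ in S, ENNReal.ofReal B ∂volume :=
          lintegral_mono fun x => ENNReal.ofReal_le_ofReal (hfB x)
      _ = ENNReal.ofReal B * volume S := by
          rw [setLIntegral_const, mul_comm]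
      _ ≤ ENNReal.ofReal B * ENNReal.ofReal (8*R) := by gcongr
      _ = ENNReal.ofReal (B * (8*R)) := (ENNReal.ofReal_mul hB).symm
  have hfinal : (P S).toReal ≤ B * (8*R) :=
    ENNReal.toReal_le_of_le_ofReal (by positivity) hPS
  calc ∫ x, GR x ^ 2 ∂P ≤ (P S).toReal := by rw [← hval]; exact hmono
    _ ≤ B * (8*R) := hfinal
    _ = 8 * B * R := by ring
end

section
/- Let P be a probability measure on ℝ with bounded density, and suppose the interval [μ−ρ, μ+ρ] is the unique shortest interval with P-measure at least 1/2, with ρ > 0. Assume the population coverage function V(ε,δ) = P[(μ+ε)−(ρ+δ), (μ+ε)+(ρ+δ)] − 1/2 admits the expansion V(ε,δ) = c₁δ + c₂ε² + c₃εδ + c₄δ² + o(ε²+δ²) with c₁ > 0 and c₂ < 0. Then there exists a positive constant c such that for all sufficiently small δ > 0, sup_m P[m − (ρ−δ), m + (ρ−δ)] < 1/2 − cδ. -/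
set_option maxHeartbeats 2000000


open MeasureTheory

/-- Separation inequality from the shorth example (Section 6): if [m−ρ, m+ρ] is the
unique shortest interval of P-measure ≥ 1/2 and the coverage function
V(ε,δ) = P[(m+ε)±(ρ+δ)] − 1/2 has expansion c₁δ + c₂ε² + c₃εδ + c₄δ² + o(ε²+δ²)
with c₁ > 0 and c₂ < 0, then for some c > 0 and all small δ > 0,
sup over centers m' of P[m'±(ρ−δ)] is strictly below 1/2 − cδ. -/
theorem stmt_12 (f : ℝ → ℝ) (B : ℝ) (hf0 : ∀ x, 0 ≤ f x) (hfB : ∀ x, f x ≤ B)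
    (P : Measure ℝ) (hP : P = volume.withDensity (fun x => ENNReal.ofReal (f x)))
    [IsProbabilityMeasure P]
    (m ρ : ℝ) (hρ : 0 < ρ)
    (hhalf : ENNReal.ofReal (1 / 2) ≤ P (Set.Icc (m - ρ) (m + ρ)))
    (huniq : ∀ c r : ℝ, 0 ≤ r → ENNReal.ofReal (1 / 2) ≤ P (Set.Icc (c - r) (c + r)) →
      ρ ≤ r ∧ (r = ρ → c = m))
    (V : ℝ → ℝ → ℝ)
    (hVdef : ∀ ε δ : ℝ,
      V ε δ = (P (Set.Icc (m + ε - (ρ + δ)) (m + ε + (ρ + δ)))).toReal - 1 / 2)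
    (c₁ c₂ c₃ c₄ : ℝ) (hc₁ : 0 < c₁) (hc₂ : c₂ < 0)
    (rem : ℝ → ℝ → ℝ)
    (hV : ∀ ε δ : ℝ, V ε δ = c₁ * δ + c₂ * ε ^ 2 + c₃ * ε * δ + c₄ * δ ^ 2 + rem ε δ)
    (ho : ∀ η > (0 : ℝ), ∃ r > (0 : ℝ), ∀ ε δ : ℝ,
      ε ^ 2 + δ ^ 2 < r → |rem ε δ| ≤ η * (ε ^ 2 + δ ^ 2)) :
    ∃ c > (0 : ℝ), ∃ δ₀ > (0 : ℝ), ∀ δ : ℝ, 0 < δ → δ < δ₀ →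
      ∀ m' : ℝ, (P (Set.Icc (m' - (ρ - δ)) (m' + (ρ - δ)))).toReal < 1 / 2 - c * δ := by
  classical
  have hB0 : (0:ℝ) ≤ B := le_trans (hf0 0) (hfB 0)
  have hne : ∀ s : Set ℝ, P s ≠ ⊤ := fun s => measure_ne_top P s
  -- bounded density: interval probabilities are bounded by B times the length
  have strip : ∀ a b : ℝ, P (Set.Icc a b) ≤ ENNReal.ofReal (B * |b - a|) := by
    intro a b
    have h1 : P (Set.Icc a b) ≤ ENNReal.ofReal (B * (b - a)) := by
      rw [hP, withDensity_apply _ measurableSet_Icc]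
      calc ∫⁻ x in Set.Icc a b, ENNReal.ofReal (f x) ∂volume
          ≤ ∫⁻ _ in Set.Icc a b, ENNReal.ofReal B ∂volume :=
            lintegral_mono fun x => ENNReal.ofReal_le_ofReal (hfB x)
        _ = ENNReal.ofReal B * volume (Set.Icc a b) := setLIntegral_const _ _
        _ = ENNReal.ofReal B * ENNReal.ofReal (b - a) := by rw [Real.volume_Icc]
        _ = ENNReal.ofReal (B * (b - a)) := (ENNReal.ofReal_mul hB0).symm
    exact h1.trans (ENNReal.ofReal_le_ofReal
      (mul_le_mul_of_nonneg_left (le_abs_self _) hB0))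
  -- quantitative continuity of interval probabilities in the endpoints
  have key : ∀ a b a' b' : ℝ, (P (Set.Icc a b)).toReal ≤
      (P (Set.Icc a' b')).toReal + B * |a' - a| + B * |b - b'| := by
    intro a b a' b'
    have hsub : Set.Icc a b ⊆ Set.Icc a' b' ∪ (Set.Icc a a' ∪ Set.Icc b' b) := by
      intro x hx
      rcases lt_or_ge x a' with h | h
      · exact Or.inr (Or.inl ⟨hx.1, h.le⟩)
      rcases le_or_gt x b' with h2 | h2
      · exact Or.inl ⟨h, h2⟩
      · exact Or.inr (Or.inr ⟨h2.le, hx.2⟩)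
    have h1 : P (Set.Icc a b) ≤ P (Set.Icc a' b')
        + (ENNReal.ofReal (B * |a' - a|) + ENNReal.ofReal (B * |b - b'|)) := by
      calc P (Set.Icc a b)
          ≤ P (Set.Icc a' b' ∪ (Set.Icc a a' ∪ Set.Icc b' b)) := measure_mono hsub
        _ ≤ P (Set.Icc a' b') + P (Set.Icc a a' ∪ Set.Icc b' b) := measure_union_le _ _
        _ ≤ P (Set.Icc a' b') + (P (Set.Icc a a') + P (Set.Icc b' b)) := by
            gcongr
            exact measure_union_le _ _
        _ ≤ _ := by
            gcongr
            · exact strip a a'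
            · exact strip b' b
    have h2 := ENNReal.toReal_mono
      (by
        refine ENNReal.add_ne_top.mpr ⟨hne _, ?_⟩
        exact ENNReal.add_ne_top.mpr ⟨ENNReal.ofReal_ne_top, ENNReal.ofReal_ne_top⟩) h1
    rw [ENNReal.toReal_add (hne _)
        (ENNReal.add_ne_top.mpr ⟨ENNReal.ofReal_ne_top, ENNReal.ofReal_ne_top⟩),
      ENNReal.toReal_add ENNReal.ofReal_ne_top ENNReal.ofReal_ne_top,
      ENNReal.toReal_ofReal (by positivity), ENNReal.toReal_ofReal (by positivity)] at h2
    linarith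
  -- the coverage function at radius ρ as a function of the center shift
  set g : ℝ → ℝ := fun ε => (P (Set.Icc (m + ε - ρ) (m + ε + ρ))).toReal with hg
  have hlip : LipschitzWith (Real.toNNReal (2 * B)) g := by
    apply LipschitzWith.of_dist_le_mul
    intro x y
    have k1 := key (m + x - ρ) (m + x + ρ) (m + y - ρ) (m + y + ρ)
    have k2 := key (m + y - ρ) (m + y + ρ) (m + x - ρ) (m + x + ρ)
    rw [show m + y - ρ - (m + x - ρ) = y - x from by ring,
      show m + x + ρ - (m + y + ρ) = x - y from by ring] at k1
    rw [show m + x - ρ - (m + y - ρ) = x - y from by ring,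
      show m + y + ρ - (m + x + ρ) = y - x from by ring] at k2
    rw [abs_sub_comm y x] at k1 k2
    rw [Real.dist_eq, Real.dist_eq, Real.coe_toNNReal _ (by positivity), abs_sub_le_iff]
    constructor
    · simp only [hg] at k1 ⊢
      linarith
    · simp only [hg] at k2 ⊢
      linarith
  -- uniqueness: away from the center, radius-ρ intervals have mass < 1/2
  have hlt : ∀ ε : ℝ, ε ≠ 0 → g ε < 1 / 2 := by
    intro ε hε
    by_contra hcon
    push_neg at hcon
    have h2 : ENNReal.ofReal (1 / 2) ≤ P (Set.Icc (m + ε - ρ) (m + ε + ρ)) :=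
      (ENNReal.ofReal_le_iff_le_toReal (hne _)).mpr hcon
    have := (huniq (m + ε) ρ hρ.le h2).2 rfl
    apply hε
    linarith
  -- tail bounds
  have tail1 : ∃ N : ℕ, P (Set.Ici ((N : ℝ))) < ENNReal.ofReal (1 / 4) := by
    have h0 : (⋂ n : ℕ, Set.Ici ((n : ℝ))) = ∅ := by
      ext x
      simp only [Set.mem_iInter, Set.mem_Ici, Set.mem_empty_iff_false, iff_false]
      push_neg
      obtain ⟨n, hn⟩ := exists_nat_gt x
      exact ⟨n, hn⟩
    have ht := tendsto_measure_iInter_atTop (μ := P) (s := fun n : ℕ => Set.Ici ((n : ℝ)))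
      (fun n => measurableSet_Ici.nullMeasurableSet)
      (fun i j hij => Set.Ici_subset_Ici.mpr (by exact_mod_cast hij)) ⟨0, hne _⟩
    rw [h0, measure_empty] at ht
    exact (ht.eventually_lt_const (ENNReal.ofReal_pos.mpr (by norm_num))).exists
  have tail2 : ∃ N : ℕ, P (Set.Iic (-(N : ℝ))) < ENNReal.ofReal (1 / 4) := by
    have h0 : (⋂ n : ℕ, Set.Iic (-(n : ℝ))) = ∅ := by
      ext x
      simp only [Set.mem_iInter, Set.mem_Iic, Set.mem_empty_iff_false, iff_false]
      push_neg
      obtain ⟨n, hn⟩ := exists_nat_gt (-x)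
      exact ⟨n, by linarith⟩
    have ht := tendsto_measure_iInter_atTop (μ := P) (s := fun n : ℕ => Set.Iic (-(n : ℝ)))
      (fun n => measurableSet_Iic.nullMeasurableSet)
      (fun i j hij => Set.Iic_subset_Iic.mpr (by
        have : (i : ℝ) ≤ (j : ℝ) := by exact_mod_cast hij
        linarith)) ⟨0, hne _⟩
    rw [h0, measure_empty] at ht
    exact (ht.eventually_lt_const (ENNReal.ofReal_pos.mpr (by norm_num))).exists
  obtain ⟨N1, hN1⟩ := tail1
  obtain ⟨N2, hN2⟩ := tail2
  set M₂ : ℝ := max (N1 : ℝ) (N2 : ℝ) with hM₂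
  have htailR : ∀ x : ℝ, M₂ ≤ x → P (Set.Ici x) < ENNReal.ofReal (1 / 4) := by
    intro x hx
    exact lt_of_le_of_lt
      (measure_mono (Set.Ici_subset_Ici.mpr (le_trans (le_max_left _ _) hx))) hN1
  have htailL : ∀ x : ℝ, x ≤ -M₂ → P (Set.Iic x) < ENNReal.ofReal (1 / 4) := by
    intro x hx
    refine lt_of_le_of_lt (measure_mono (Set.Iic_subset_Iic.mpr ?_)) hN2
    have : (N2 : ℝ) ≤ M₂ := le_max_right _ _
    linarith
  -- expansion data with η = -c₂
  obtain ⟨r, hrpos, hrem⟩ := ho (-c₂) (neg_pos.mpr hc₂)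
  set γ : ℝ := min (Real.sqrt (r / 2)) (c₁ / (4 * (|c₃| + 1))) with hγdef
  have hsq2 : (0:ℝ) < Real.sqrt (r / 2) := Real.sqrt_pos.mpr (by linarith)
  have hγpos : 0 < γ := lt_min hsq2 (by positivity)
  have hγ2 : γ ^ 2 ≤ r / 2 := by
    have h1 : γ ≤ Real.sqrt (r / 2) := min_le_left _ _
    calc γ ^ 2 ≤ Real.sqrt (r / 2) ^ 2 := by nlinarith
      _ = r / 2 := Real.sq_sqrt (by linarith)
  have hγle : γ ≤ c₁ / (4 * (|c₃| + 1)) := min_le_right _ _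
  -- compact maximum over the far region
  set M₁ : ℝ := max γ (M₂ + |m| + ρ) with hM₁
  set K : Set ℝ := Set.Icc (-M₁) (-γ) ∪ Set.Icc γ M₁ with hK
  have hKc : IsCompact K := (isCompact_Icc).union isCompact_Icc
  have hKne : K.Nonempty := ⟨γ, Or.inr ⟨le_refl γ, le_max_left _ _⟩⟩
  obtain ⟨ε₀, hε₀K, hε₀max⟩ := hKc.exists_isMaxOn hKne hlip.continuous.continuousOn
  have hε₀ne : ε₀ ≠ 0 := by
    intro he
    rcases hε₀K with h | h
    · have := h.2; rw [he] at this; linarith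
    · have := h.1; rw [he] at this; linarith
  have hs1 : g ε₀ < 1 / 2 := hlt ε₀ hε₀ne
  set s : ℝ := max (g ε₀) (1 / 4) with hs
  have hslt : s < 1 / 2 := max_lt hs1 (by norm_num)
  have hfar : ∀ ε : ℝ, γ ≤ |ε| → g ε ≤ s := by
    intro ε hγε
    rcases le_or_gt |ε| M₁ with hle | hgt
    · have hmem : ε ∈ K := by
        rcases le_or_gt 0 ε with hpos | hneg
        · rw [abs_of_nonneg hpos] at hγε hle
          exact Or.inr ⟨hγε, hle⟩
        · rw [abs_of_neg hneg] at hγε hle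
          exact Or.inl ⟨by linarith, by linarith⟩
      exact le_trans (hε₀max hmem) (le_max_left _ _)
    · have hb : g ε ≤ 1 / 4 := by
        have hM₂le : M₂ + |m| + ρ ≤ M₁ := le_max_right _ _
        rcases le_or_gt 0 ε with hpos | hneg
        · rw [abs_of_nonneg hpos] at hgt
          have hsub2 : Set.Icc (m + ε - ρ) (m + ε + ρ) ⊆ Set.Ici M₂ := by
            intro x hx
            have h1 := hx.1
            have h2 := neg_abs_le m
            simp only [Set.mem_Ici]
            linarith
          have hle2 := (measure_mono hsub2).trans_lt (htailR M₂ le_rfl)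
          have := ENNReal.toReal_mono ENNReal.ofReal_ne_top hle2.le
          rw [ENNReal.toReal_ofReal (by norm_num)] at this
          exact this
        · rw [abs_of_neg hneg] at hgt
          have hsub2 : Set.Icc (m + ε - ρ) (m + ε + ρ) ⊆ Set.Iic (-M₂) := by
            intro x hx
            have h1 := hx.2
            have h2 := le_abs_self m
            simp only [Set.mem_Iic]
            linarith
          have hle2 := (measure_mono hsub2).trans_lt (htailL (-M₂) le_rfl)
          have := ENNReal.toReal_mono ENNReal.ofReal_ne_top hle2.le
          rw [ENNReal.toReal_ofReal (by norm_num)] at this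
          exact this
      exact le_trans hb (le_max_right _ _)
  clear_value γ s
  -- choose constants
  refine ⟨c₁ / 4, by positivity,
    min (min (Real.sqrt (r / 2)) (c₁ / (4 * (|c₄| - c₂)))) ((1 / 2 - s) / (2 * (c₁ / 4))),
    ?_, ?_⟩
  · refine lt_min (lt_min hsq2 ?_) ?_
    · have : (0:ℝ) < |c₄| - c₂ := by
        have := abs_nonneg c₄
        linarith
      positivity
    · have : (0:ℝ) < 1 / 2 - s := by linarith
      positivity
  intro δ hδ hδlt m'
  have hd1 : δ < Real.sqrt (r / 2) :=
    lt_of_lt_of_le hδlt (le_trans (min_le_left _ _) (min_le_left _ _))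
  have hd2 : δ < c₁ / (4 * (|c₄| - c₂)) :=
    lt_of_lt_of_le hδlt (le_trans (min_le_left _ _) (min_le_right _ _))
  have hd3 : δ < (1 / 2 - s) / (2 * (c₁ / 4)) := lt_of_lt_of_le hδlt (min_le_right _ _)
  rcases lt_or_ge |m' - m| γ with hnear | hfarc
  · -- near regime: use the expansion
    set ε : ℝ := m' - m with hε
    clear_value ε
    have hset : (P (Set.Icc (m' - (ρ - δ)) (m' + (ρ - δ)))).toReal = V ε (-δ) + 1 / 2 := by
      rw [hVdef]
      rw [show m + ε - (ρ + -δ) = m' - (ρ - δ) from by rw [hε]; ring,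
        show m + ε + (ρ + -δ) = m' + (ρ - δ) from by rw [hε]; ring]
      ring
    rw [hset]
    have hVexp := hV ε (-δ)
    have hε2 : ε ^ 2 < γ ^ 2 := by
      have := sq_abs ε
      nlinarith [abs_nonneg ε]
    have hδ2 : δ ^ 2 < r / 2 := by
      have h1 : δ ^ 2 < Real.sqrt (r / 2) ^ 2 := by nlinarith
      have h2 : Real.sqrt (r / 2) ^ 2 = r / 2 := Real.sq_sqrt (by linarith)
      linarith
    have hr2 : ε ^ 2 + (-δ) ^ 2 < r := by
      rw [neg_sq]
      linarith
    have hrb := hrem ε (-δ) hr2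
    rw [abs_le, neg_sq] at hrb
    have hR := hrb.2
    rw [neg_sq] at hVexp
    -- bound the cross term
    have hγ3 : (|c₃| + 1) * γ ≤ c₁ / 4 := by
      have h := hγle
      rw [le_div_iff₀ (by positivity)] at h
      linarith
    have hX : c₃ * ε * -δ ≤ c₁ / 4 * δ := by
      have h1 : c₃ * ε * -δ ≤ |c₃| * |ε| * δ := by
        calc c₃ * ε * -δ ≤ |c₃ * ε * -δ| := le_abs_self _
          _ = |c₃| * |ε| * δ := by
              rw [abs_mul, abs_mul, abs_neg, abs_of_pos hδ]
      have h2 : |c₃| * |ε| * δ ≤ (|c₃| + 1) * γ * δ := by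
        refine mul_le_mul_of_nonneg_right ?_ hδ.le
        exact mul_le_mul (by linarith [abs_nonneg c₃]) hnear.le (abs_nonneg ε)
          (by positivity)
      have h3 : (|c₃| + 1) * γ * δ ≤ c₁ / 4 * δ :=
        mul_le_mul_of_nonneg_right hγ3 hδ.le
      exact le_trans h1 (le_trans h2 h3)
    have hc4 : c₄ * δ ^ 2 ≤ |c₄| * δ ^ 2 :=
      mul_le_mul_of_nonneg_right (le_abs_self c₄) (sq_nonneg δ)
    have hKd : (|c₄| - c₂) * δ < c₁ / 4 := by
      rw [lt_div_iff₀ (by linarith [abs_nonneg c₄])] at hd2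
      linarith
    have hKd2 : (|c₄| - c₂) * δ ^ 2 < c₁ / 4 * δ := by
      have h5 := mul_lt_mul_of_pos_right hKd hδ
      linarith [h5, sq_nonneg δ, show (|c₄| - c₂) * δ * δ = (|c₄| - c₂) * δ ^ 2 from by ring]
    have hfin : (0:ℝ) < c₁ / 4 * δ := by positivity
    linarith [hVexp, hR, hX, hc4, hKd2, hfin]
  · -- far regime
    have h1 : (P (Set.Icc (m' - (ρ - δ)) (m' + (ρ - δ)))).toReal ≤ g (m' - m) := by
      apply ENNReal.toReal_mono (hne _)
      apply measure_mono
      apply Set.Icc_subset_Icc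
      · linarith
      · linarith
    have h2 : g (m' - m) ≤ s := hfar _ hfarc
    have h3 : c₁ / 4 * δ < (1 / 2 - s) / 2 := by
      have h4 := mul_lt_mul_of_pos_left hd3 (show (0:ℝ) < c₁ / 4 by positivity)
      have h5 : c₁ / 4 * ((1 / 2 - s) / (2 * (c₁ / 4))) = (1 / 2 - s) / 2 := by
        field_simp
      linarith
    linarith
end

section
/- Let f be a density on ℝ, differentiable at the points μ−ρ and μ+ρ, and let V(ε, δ) = ∫_{(μ+ε)−(ρ+δ)}^{(μ+ε)+(ρ+δ)} f(x) dx − ∫_{μ−ρ}^{μ+ρ} f(x) dx. If ε ↦ V(ε, 0) is maximized at ε = 0, then f(μ+ρ) = f(μ−ρ) and f′(μ+ρ) − f′(μ−ρ) ≤ 0. -/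
open MeasureTheory intervalIntegral

lemma key_int (f : ℝ → ℝ) (hfi : Integrable f) (x₀ d : ℝ) (hd : HasDerivAt f d x₀)
    (η : ℝ) (hη : 0 < η) :
    ∀ᶠ ε in nhds (0:ℝ),
      |(∫ t in x₀..(x₀+ε), f t) - f x₀ * ε - d * ε^2 / 2| ≤ η * ε^2 := by
  have h := (hasDerivAt_iff_isLittleO.mp hd).def hη
  rw [Metric.eventually_nhds_iff] at h
  obtain ⟨δ, hδ, hb⟩ := h
  rw [Metric.eventually_nhds_iff]
  refine ⟨δ, hδ, fun ε hε => ?_⟩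
  simp only [Real.dist_eq, sub_zero] at hε
  have hint : IntervalIntegrable f volume x₀ (x₀+ε) := hfi.intervalIntegrable
  have hint2 : IntervalIntegrable (fun t => f x₀ + d * (t - x₀)) volume x₀ (x₀+ε) :=
    (Continuous.intervalIntegrable (by continuity) _ _)
  have hsplit : (∫ t in x₀..(x₀+ε), f t) - f x₀ * ε - d * ε^2 / 2
      = ∫ t in x₀..(x₀+ε), (f t - (f x₀ + d * (t - x₀))) := by
    rw [intervalIntegral.integral_sub hint hint2]
    have h2 : (∫ t in x₀..(x₀+ε), (f x₀ + d * (t - x₀)))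
        = f x₀ * ε + d * ε^2 / 2 := by
      rw [intervalIntegral.integral_add (Continuous.intervalIntegrable (by continuity) _ _)
        (Continuous.intervalIntegrable (by continuity) _ _),
        intervalIntegral.integral_const, intervalIntegral.integral_const_mul,
        intervalIntegral.integral_sub (Continuous.intervalIntegrable (by continuity) _ _)
          (Continuous.intervalIntegrable (by continuity) _ _),
        integral_id, intervalIntegral.integral_const]
      simp only [smul_eq_mul]
      ring
    rw [h2]; ring
  rw [hsplit]
  have hbound : ∀ t ∈ Set.uIoc x₀ (x₀+ε), ‖f t - (f x₀ + d * (t - x₀))‖ ≤ η * |ε| := by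
    intro t ht
    have hna := neg_abs_le ε
    have hla := le_abs_self ε
    have ht' : |t - x₀| ≤ |ε| := by
      rw [abs_le]
      rcases Set.mem_uIoc.mp ht with ⟨h1, h2⟩ | ⟨h1, h2⟩ <;> constructor <;> linarith
    have hdist : dist t x₀ < δ := by
      rw [Real.dist_eq]; exact lt_of_le_of_lt ht' hε
    have hbb := hb hdist
    simp only [Real.norm_eq_abs, smul_eq_mul] at hbb ⊢
    calc |f t - (f x₀ + d * (t - x₀))| = |f t - f x₀ - (t - x₀) * d| := by ring_nf
      _ ≤ η * |t - x₀| := hbb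
      _ ≤ η * |ε| := by nlinarith [abs_nonneg (t - x₀)]
  calc |∫ t in x₀..(x₀+ε), (f t - (f x₀ + d * (t - x₀)))|
      ≤ η * |ε| * |x₀ + ε - x₀| :=
        intervalIntegral.norm_integral_le_of_norm_le_const hbound
    _ = η * ε^2 := by rw [add_sub_cancel_left, mul_assoc, ← sq, sq_abs]

/-- Structural fact about the population shorth (Section 6): if f is a density,
differentiable at μ±ρ, and ε ↦ V(ε,0) (the coverage difference of the shifted interval)
is maximized at ε = 0, then f(μ+ρ) = f(μ−ρ) and f′(μ+ρ) − f′(μ−ρ) ≤ 0. -/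
theorem stmt_13 (f : ℝ → ℝ) (hf0 : ∀ x, 0 ≤ f x)
    (hfi : Integrable f) (hf1 : ∫ x, f x = 1)
    (m ρ : ℝ) (hρ : 0 < ρ)
    (d₁ d₂ : ℝ) (hd₁ : HasDerivAt f d₁ (m - ρ)) (hd₂ : HasDerivAt f d₂ (m + ρ))
    (V : ℝ → ℝ → ℝ)
    (hV : ∀ ε δ : ℝ, V ε δ =
      (∫ x in (m + ε - (ρ + δ))..(m + ε + (ρ + δ)), f x) - ∫ x in (m - ρ)..(m + ρ), f x)
    (hmax : ∀ ε : ℝ, V ε 0 ≤ V 0 0) :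
    f (m + ρ) = f (m - ρ) ∧ d₂ - d₁ ≤ 0 := by
  set F : ℝ → ℝ := fun x => ∫ t in (0:ℝ)..x, f t with hF
  have hFsub : ∀ a b : ℝ, (∫ t in a..b, f t) = F b - F a := by
    intro a b
    show (∫ t in a..b, f t) = (∫ t in (0:ℝ)..b, f t) - ∫ t in (0:ℝ)..a, f t
    rw [← intervalIntegral.integral_add_adjacent_intervals
      (hfi.intervalIntegrable : IntervalIntegrable f volume 0 a)
      (hfi.intervalIntegrable : IntervalIntegrable f volume a b)]
    rw [intervalIntegral.integral_symm]
    ring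
  set g : ℝ → ℝ := fun ε => F (m + ε + ρ) - F (m + ε - ρ) with hg
  have hgmax : ∀ ε, g ε ≤ g 0 := by
    intro ε
    have h1 := hmax ε
    rw [hV, hV] at h1
    simp only [add_zero] at h1
    rw [hg]
    simp only
    rw [show m + 0 + ρ = m + ρ by ring, show m + 0 - ρ = m - ρ by ring,
      ← hFsub, ← hFsub]
    linarith
  have hFderiv : ∀ x₀ d, HasDerivAt f d x₀ → HasDerivAt F (f x₀) x₀ := by
    intro x₀ d hd
    exact intervalIntegral.integral_hasDerivAt_right hfi.intervalIntegrable
      hfi.aestronglyMeasurable.stronglyMeasurableAtFilter hd.continuousAt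
  have hA : HasDerivAt (fun ε : ℝ => F (m + ε + ρ)) (f (m + ρ)) 0 := by
    have hin : HasDerivAt (fun ε : ℝ => m + ε + ρ) 1 0 :=
      ((hasDerivAt_id' (0:ℝ)).const_add m).add_const ρ
    have hout : HasDerivAt F (f (m + ρ)) ((fun ε : ℝ => m + ε + ρ) 0) := by
      simpa using hFderiv _ _ hd₂
    simpa [Function.comp_def] using HasDerivAt.comp (0:ℝ) hout hin
  have hB : HasDerivAt (fun ε : ℝ => F (m + ε - ρ)) (f (m - ρ)) 0 := by
    have hin : HasDerivAt (fun ε : ℝ => m + ε - ρ) 1 0 :=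
      ((hasDerivAt_id' (0:ℝ)).const_add m).sub_const ρ
    have hout : HasDerivAt F (f (m - ρ)) ((fun ε : ℝ => m + ε - ρ) 0) := by
      simpa using hFderiv _ _ hd₁
    simpa [Function.comp_def] using HasDerivAt.comp (0:ℝ) hout hin
  have hgderiv : HasDerivAt g (f (m + ρ) - f (m - ρ)) 0 := hA.sub hB
  have hloc : IsLocalMax g 0 := Filter.Eventually.of_forall hgmax
  have heq : f (m + ρ) - f (m - ρ) = 0 := hloc.hasDerivAt_eq_zero hgderiv
  have heq' : f (m + ρ) = f (m - ρ) := by linarith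
  refine ⟨heq', ?_⟩
  by_contra hcon
  push_neg at hcon
  set η : ℝ := (d₂ - d₁) / 8 with hη
  have hηpos : 0 < η := by rw [hη]; linarith
  have h2 := key_int f hfi (m + ρ) d₂ hd₂ η hηpos
  have h1 := key_int f hfi (m - ρ) d₁ hd₁ η hηpos
  have hcomb := h2.and h1
  rw [Metric.eventually_nhds_iff] at hcomb
  obtain ⟨δ, hδ, hb⟩ := hcomb
  set ε : ℝ := δ / 2 with hεdef
  have hεpos : 0 < ε := by positivity
  have hεlt : dist ε 0 < δ := by
    rw [Real.dist_eq, sub_zero, abs_of_pos hεpos]; linarith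
  obtain ⟨e2, e1⟩ := hb hεlt
  have hgdiff : g ε - g 0 = (∫ t in (m+ρ)..((m+ρ)+ε), f t) - ∫ t in (m-ρ)..((m-ρ)+ε), f t := by
    rw [hFsub, hFsub, hg]
    simp only
    rw [show m + ε + ρ = m + ρ + ε by ring, show m + ε - ρ = m - ρ + ε by ring,
      show m + 0 + ρ = m + ρ by ring, show m + 0 - ρ = m - ρ by ring]
    ring
  have hle := hgmax ε
  rw [heq'] at e2
  rw [abs_le] at e1 e2
  have hkey : (d₂ - d₁) * ε^2 / 2 ≤ 2 * η * ε^2 := by nlinarith [e1.1, e1.2, e2.1, e2.2]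
  rw [hη] at hkey
  nlinarith [sq_nonneg ε, mul_pos (mul_pos hcon hεpos) hεpos]
end

section
/- Let G_n(t) = t²·v_n − 2t·x_n + ρ_n(t) where v_n → v > 0, x_n is a bounded real sequence, and sup_{|t| ≤ K} |ρ_n(t)| → 0 for every K > 0. Suppose t_n minimizes G_n over ℝ and (t_n) is bounded. Then t_n − x_n/v_n → 0. -/
open Filter

/-- Deterministic argmin step from the partial splines example (Section 8):
if G_n(t) = t²v_n − 2t x_n + ρ_n(t) with v_n → v > 0, (x_n) bounded,
sup_{|t| ≤ K}|ρ_n(t)| → 0 for every K > 0, and t_n is a bounded sequence of minimizers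
of G_n over ℝ, then t_n − x_n/v_n → 0. -/
theorem stmt_18 (G : ℕ → ℝ → ℝ) (v x : ℕ → ℝ) (ρ : ℕ → ℝ → ℝ)
    (hG : ∀ n t, G n t = t ^ 2 * v n - 2 * t * x n + ρ n t)
    (v₀ : ℝ) (hv₀ : 0 < v₀) (hv : Tendsto v atTop (nhds v₀))
    (Cx : ℝ) (hx : ∀ n, |x n| ≤ Cx)
    (hρ : ∀ K > (0 : ℝ), ∀ ε > (0 : ℝ), ∀ᶠ n in atTop, ∀ t : ℝ, |t| ≤ K → |ρ n t| < ε)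
    (tn : ℕ → ℝ) (hmin : ∀ n, ∀ t : ℝ, G n (tn n) ≤ G n t)
    (Ct : ℝ) (htb : ∀ n, |tn n| ≤ Ct) :
    Tendsto (fun n => tn n - x n / v n) atTop (nhds 0) := by
  rw [Metric.tendsto_nhds]
  intro ε hε
  have hCx0 : 0 ≤ Cx := (abs_nonneg _).trans (hx 0)
  have hCt0 : 0 ≤ Ct := (abs_nonneg _).trans (htb 0)
  set K : ℝ := max Ct (2 * Cx / v₀) with hK
  have hK0 : 0 ≤ K := le_trans hCt0 (le_max_left _ _)
  have hE : 0 < v₀ * ε ^ 2 / 4 := by positivity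
  have h1 : ∀ᶠ n in atTop, v₀ / 2 < v n :=
    hv.eventually (eventually_gt_nhds (by linarith))
  have h2 := hρ (K + 1) (by linarith) (v₀ * ε ^ 2 / 4) hE
  filter_upwards [h1, h2] with n hvn hρn
  have hvpos : 0 < v n := lt_trans (by positivity) hvn
  have hs : |x n / v n| ≤ 2 * Cx / v₀ := by
    rw [abs_div, abs_of_pos hvpos, div_le_div_iff₀ hvpos hv₀]
    nlinarith [hx n, abs_nonneg (x n)]
  have hρs := hρn (x n / v n) (hs.trans (by
    have := le_max_right Ct (2 * Cx / v₀); linarith))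
  have hρt := hρn (tn n) ((htb n).trans (by
    have := le_max_left Ct (2 * Cx / v₀); linarith))
  have hG' := hmin n (x n / v n)
  rw [hG, hG] at hG'
  have hxv : x n / v n * v n = x n := div_mul_cancel₀ _ (ne_of_gt hvpos)
  have hxv2 : (x n / v n) ^ 2 * v n = x n / v n * x n := by
    rw [sq, mul_assoc, hxv]
  have hxv3 : tn n * (x n / v n) * v n = tn n * x n := by
    rw [mul_assoc, hxv]
  have h3 : v n * (tn n - x n / v n) ^ 2 ≤ ρ n (x n / v n) - ρ n (tn n) := by
    nlinarith [hG', hxv2, hxv3]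
  have key : (tn n - x n / v n) ^ 2 < ε ^ 2 := by
    nlinarith [h3, abs_lt.mp hρs, abs_lt.mp hρt, hvn, hv₀,
      mul_nonneg (sub_nonneg.mpr hvn.le) (sq_nonneg (tn n - x n / v n))]
  rw [Real.dist_eq, sub_zero, abs_lt]
  constructor <;> nlinarith [key, hε]
end
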